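/- arXiv:2005.12990 — 4 statements merged into one kernel-verified Lean document; each statement's English description precedes it below -/
import Mathlib

section
/- Let k and n be natural numbers with n ≥ 1, and let M be a k × k matrix with entries in ℤ[X] such that every diagonal entry satisfies M i i = X^n, and every off-diagonal entry M i j (i ≠ j) is either 0 or equal to X^r for some natural number r < n. Then det M ≠ 0 in ℤ[X]. -/
open Polynomial

/-- If `M` is a `k × k` matrix over `ℤ[X]` whose diagonal entries are
all `X^n` (`n ≥ 1`) and whose off-diagonal entries are each `0` or `X^r` for some
`r < n`, then `det M ≠ 0`. -/
theorem det_ne_zero_of_diag_pow_of_offDiag_zero_or_pow_lt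
    (k n : ℕ) (hn : 1 ≤ n)
    (M : Matrix (Fin k) (Fin k) ℤ[X])
    (hdiag : ∀ i, M i i = X ^ n)
    (hoff : ∀ i j, i ≠ j → M i j = 0 ∨ ∃ r : ℕ, r < n ∧ M i j = X ^ r) :
    M.det ≠ 0 := by
  have key : (M.det).coeff (k * n) = 1 := by
    rw [Matrix.det_apply, Polynomial.finset_sum_coeff]
    rw [Finset.sum_eq_single (1 : Equiv.Perm (Fin k))]
    · simp only [Equiv.Perm.sign_one, one_smul, Equiv.Perm.one_apply, hdiag]
      rw [Finset.prod_const, ← pow_mul, mul_comm]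
      simp
    · intro σ _ hσ
      rw [Polynomial.coeff_smul]
      obtain ⟨i, hi⟩ : ∃ i, σ i ≠ i := by
        by_contra h
        push_neg at h
        exact hσ (Equiv.ext h)
      by_cases hz : (∏ j, M (σ j) j) = 0
      · simp [hz]
      · have hlt : (∏ j, M (σ j) j).natDegree < k * n := by
          rw [Polynomial.natDegree_prod _ _ (fun j _ =>
            fun h => hz (Finset.prod_eq_zero (Finset.mem_univ j) h))]
          have hb : ∀ j ∈ Finset.univ, (M (σ j) j).natDegree ≤ n := by
            intro j _
            rcases eq_or_ne (σ j) j with he | hne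
            · rw [he, hdiag]; simp
            · rcases hoff (σ j) j hne with h0 | ⟨r', hr', hX⟩
              · exact absurd (Finset.prod_eq_zero (f := fun j => M (σ j) j) (Finset.mem_univ j) h0) hz
              · rw [hX, Polynomial.natDegree_X_pow]; omega
          have hstrict : (M (σ i) i).natDegree < n := by
            rcases hoff (σ i) i hi with h0 | ⟨r, hr, hXr⟩
            · exact absurd (Finset.prod_eq_zero (f := fun j => M (σ j) j) (Finset.mem_univ i) h0) hz
            · rw [hXr, Polynomial.natDegree_X_pow]; exact hr
          calc ∑ j, (M (σ j) j).natDegree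
              < ∑ _j : Fin k, n :=
                Finset.sum_lt_sum hb ⟨i, Finset.mem_univ i, hstrict⟩
            _ = k * n := by simp [Finset.sum_const, mul_comm]
        simp [Polynomial.coeff_eq_zero_of_natDegree_lt hlt]
    · intro h; exact absurd (Finset.mem_univ 1) h
  intro h
  rw [h] at key
  simp at key
end

section
/- Let L = ℤ[z^{±1}, v^{±1}] be the Laurent polynomial ring in two variables over ℤ (realized as the group algebra of ℤ × ℤ over ℤ), and let φ : ℤ[Z, D, V, W] → L be the ring homomorphism from the polynomial ring in four variables over ℤ determined by φ(Z) = z, φ(V) = v, φ(W) = v⁻¹, and φ(D) = z⁻¹(v⁻¹ − v). Then the kernel of φ is exactly the ideal of ℤ[Z, D, V, W] generated by V·W − 1 and D·Z − (W − V). In particular, the ring Λ = ℤ[Z, D, V, W]/(V·W − 1, D·Z − (W − V)) embeds as a subring of ℤ[z^{±1}, v^{±1}]. -/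
open MvPolynomial

/-- The Laurent polynomial ring `ℤ[z^{±1}, v^{±1}]`, realized as the group algebra of
`ℤ × ℤ` over `ℤ`; the exponent `(a, b)` corresponds to the monomial `z^a * v^b`. -/
abbrev LaurentZV : Type := AddMonoidAlgebra ℤ (ℤ × ℤ)

/-- The element `z` of `ℤ[z^{±1}, v^{±1}]`. -/
noncomputable def zL : LaurentZV := AddMonoidAlgebra.single (1, 0) 1
/-- The element `v` of `ℤ[z^{±1}, v^{±1}]`. -/
noncomputable def vL : LaurentZV := AddMonoidAlgebra.single (0, 1) 1
/-- The element `v⁻¹` of `ℤ[z^{±1}, v^{±1}]`. -/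
noncomputable def vinvL : LaurentZV := AddMonoidAlgebra.single (0, -1) 1
/-- The element `z⁻¹ * (v⁻¹ − v)` of `ℤ[z^{±1}, v^{±1}]`. -/
noncomputable def dL : LaurentZV :=
  AddMonoidAlgebra.single (-1, -1) 1 - AddMonoidAlgebra.single (-1, 1) 1

/-- The variable `Z` in `ℤ[Z, D, V, W]`. -/
noncomputable def ZZ : MvPolynomial (Fin 4) ℤ := X 0
/-- The variable `D` in `ℤ[Z, D, V, W]`. -/
noncomputable def DD : MvPolynomial (Fin 4) ℤ := X 1
/-- The variable `V` in `ℤ[Z, D, V, W]`. -/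
noncomputable def VV : MvPolynomial (Fin 4) ℤ := X 2
/-- The variable `W` in `ℤ[Z, D, V, W]`. -/
noncomputable def WW : MvPolynomial (Fin 4) ℤ := X 3

/-- The ring homomorphism `φ : ℤ[Z, D, V, W] → ℤ[z^{±1}, v^{±1}]` with `φ(Z) = z`,
`φ(D) = z⁻¹(v⁻¹ − v)`, `φ(V) = v` and `φ(W) = v⁻¹`. -/
noncomputable def phiL : MvPolynomial (Fin 4) ℤ →+* LaurentZV :=
  MvPolynomial.eval₂Hom (Int.castRingHom LaurentZV) ![zL, dL, vL, vinvL]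


set_option maxHeartbeats 1000000
set_option synthInstance.maxHeartbeats 400000

noncomputable section KerPhiLAux

abbrev P4' : Type := MvPolynomial (Fin 4) ℤ

def Ispan' : Ideal P4' := Ideal.span {VV * WW - 1, DD * ZZ - (WW - VV)}

lemma sub_aeval_mem' (f : Fin 4 → P4') (p : P4') :
    p - aeval f p ∈ Ideal.span (Set.range fun i => X i - f i) := by
  induction p using MvPolynomial.induction_on with
  | C a => simp [aeval_C, algebraMap_int_eq]
  | add p q hp hq =>
      have : p + q - aeval f (p + q) = (p - aeval f p) + (q - aeval f q) := by
        rw [map_add]; ring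
      rw [this]; exact add_mem hp hq
  | mul_X p i hp =>
      have : p * X i - aeval f (p * X i)
          = (p - aeval f p) * X i + aeval f p * (X i - f i) := by
        rw [map_mul, aeval_X]; ring
      rw [this]
      exact add_mem (Ideal.mul_mem_right _ _ hp)
        (Ideal.mul_mem_left _ _ (Ideal.subset_span ⟨i, rfl⟩))

lemma Z_mul_mem' {p : P4'} (h : ZZ * p ∈ Ispan') : p ∈ Ispan' := by
  classical
  set g0 : Fin 4 → P4' := ![X 0, X 1, X 2, DD * ZZ + VV] with hg0
  set g1 : Fin 4 → P4' := ![0, X 1, X 2, X 3] with hg1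
  set α : P4' →ₐ[ℤ] P4' := aeval g0 with hα
  set β : P4' →ₐ[ℤ] P4' := aeval g1 with hβ
  obtain ⟨a, b, hab⟩ := Ideal.mem_span_pair.1 h
  have hpoly_def : α (VV * WW - 1) = VV * (DD * ZZ + VV) - 1 := by
    simp [hα, hg0, VV, WW, DD, ZZ]
  have hf2 : α (DD * ZZ - (WW - VV)) = 0 := by
    simp [hα, hg0, VV, WW, DD, ZZ]
  have hZfix : α ZZ = ZZ := by simp [hα, hg0, ZZ]
  have key : ZZ * α p = α a * (VV * (DD * ZZ + VV) - 1) := by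
    have h2 := congrArg α hab
    rw [map_add, map_mul, map_mul, hpoly_def, hf2, map_mul, hZfix] at h2
    linear_combination -h2
  have hb0 : β (α a) = 0 := by
    have h3 := congrArg β key
    rw [map_mul, map_mul] at h3
    have hZ0 : β ZZ = 0 := by simp [hβ, hg1, ZZ]
    have hrel : β (VV * (DD * ZZ + VV) - 1) = VV * VV - 1 := by
      simp [hβ, hg1, VV, DD, ZZ]
    rw [hZ0, hrel, zero_mul] at h3
    have hne : (VV * VV - 1 : P4') ≠ 0 := by
      intro h0
      have h4 := congrArg (eval (fun _ => (0:ℤ))) h0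
      simp [VV] at h4
    rcases mul_eq_zero.1 h3.symm with h1 | h1
    · exact h1
    · exact absurd h1 hne
  obtain ⟨r, hr⟩ : ZZ ∣ α a := by
    rw [← Ideal.mem_span_singleton]
    have hmem := sub_aeval_mem' g1 (α a)
    rw [show aeval g1 (α a) = β (α a) from rfl, hb0, sub_zero] at hmem
    refine Ideal.span_le.2 ?_ hmem
    rintro x ⟨i, rfl⟩
    fin_cases i <;>
      simp [hg1, ZZ, Ideal.mem_span_singleton]
  have hαp : α p = r * (VV * (DD * ZZ + VV) - 1) := by
    apply mul_left_cancel₀ (show (ZZ : P4') ≠ 0 from X_ne_zero 0)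
    rw [key, hr]; ring
  have hpolyI : VV * (DD * ZZ + VV) - 1 ∈ Ispan' :=
    Ideal.mem_span_pair.2 ⟨1, VV, by ring⟩
  have hαpI : α p ∈ Ispan' := by rw [hαp]; exact Ideal.mul_mem_left _ _ hpolyI
  have hpa : p - α p ∈ Ispan' := by
    have hmem := sub_aeval_mem' g0 p
    refine Ideal.span_le.2 ?_ hmem
    rintro x ⟨i, rfl⟩
    fin_cases i
    · simp [hg0]
    · simp [hg0]
    · simp [hg0]
    · have heq : X 3 - g0 3 = -(DD * ZZ - (WW - VV)) := by
        simp [hg0, DD, ZZ, VV, WW]; ring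
      show X (3 : Fin 4) - g0 3 ∈ Ispan'
      rw [heq]
      exact neg_mem (Ideal.subset_span (by simp [Ispan']))
  have hfin : p = (p - α p) + α p := by ring
  rw [hfin]; exact add_mem hpa hαpI

lemma Z_pow_mul_mem' {p : P4'} {n : ℕ} (h : ZZ ^ n * p ∈ Ispan') : p ∈ Ispan' := by
  induction n generalizing p with
  | zero => simpa using h
  | succ n ih =>
      have h2 : ZZ ^ n * (ZZ * p) ∈ Ispan' := by
        rw [show ZZ ^ n * (ZZ * p) = ZZ ^ (n + 1) * p by ring]; exact h
      exact Z_mul_mem' (ih h2)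

/-- group hom out of `ℤ × ℤ` determined by two elements of a commutative group -/
def pairHom' {G : Type*} [CommGroup G] (u w : G) : Multiplicative (ℤ × ℤ) →* G where
  toFun x := u ^ (Multiplicative.toAdd x).1 * w ^ (Multiplicative.toAdd x).2
  map_one' := by simp
  map_mul' x y := by
    simp only [toAdd_mul, Prod.fst_add, Prod.snd_add, zpow_add]
    exact mul_mul_mul_comm _ _ _ _

abbrev QQ' : Type := P4' ⧸ Ispan'
def mkI' : P4' →+* QQ' := Ideal.Quotient.mk Ispan'
def zQ' : QQ' := mkI' ZZ
abbrev SS' : Type := Localization.Away zQ'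
def iota' : QQ' →+* SS' := algebraMap QQ' SS'

lemma hVW' : mkI' VV * mkI' WW = 1 := by
  have h : mkI' (VV * WW - 1) = 0 :=
    Ideal.Quotient.eq_zero_iff_mem.2 (Ideal.subset_span (by simp))
  rw [map_sub, map_mul, map_one, sub_eq_zero] at h
  exact h

lemma hDZ' : mkI' DD * zQ' = mkI' WW - mkI' VV := by
  have h : mkI' (DD * ZZ - (WW - VV)) = 0 :=
    Ideal.Quotient.eq_zero_iff_mem.2 (Ideal.subset_span (by simp))
  rw [map_sub, map_mul, map_sub, sub_eq_zero] at h
  exact h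

def uU' : SS'ˣ :=
  (IsLocalization.map_units (M := Submonoid.powers zQ') SS'
    ⟨zQ', Submonoid.mem_powers _⟩).unit

lemma uU_val' : (uU' : SS') = iota' zQ' := IsUnit.unit_spec _

def wU' : SS'ˣ :=
  Units.mkOfMulEqOne (iota' (mkI' VV)) (iota' (mkI' WW))
    (by rw [← map_mul, hVW', map_one])

lemma wU_val' : (wU' : SS') = iota' (mkI' VV) := rfl
lemma wU_inv_val' : ((wU'⁻¹ : SS'ˣ) : SS') = iota' (mkI' WW) := rfl

def gS' : LaurentZV →+* SS' :=
  ((AddMonoidAlgebra.lift ℤ SS' (ℤ × ℤ))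
    ((Units.coeHom SS').comp (pairHom' uU' wU'))).toRingHom

lemma gS_single' (a : ℤ × ℤ) :
    gS' (AddMonoidAlgebra.single a 1) = ((uU' ^ a.1 * wU' ^ a.2 : SS'ˣ) : SS') := by
  show ((AddMonoidAlgebra.lift ℤ SS' (ℤ × ℤ)) _) (AddMonoidAlgebra.single a 1) = _
  rw [AddMonoidAlgebra.lift_single]
  rw [Algebra.smul_def, map_one, one_mul]
  rfl

lemma gS_comp' : gS'.comp phiL = iota'.comp mkI' := by
  apply MvPolynomial.ringHom_ext
  · intro r
    show gS' (phiL (C r)) = iota' (mkI' (C r))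
    rw [show (C r : P4') = (r : P4') from rfl, map_intCast, map_intCast,
      map_intCast, map_intCast]
  · intro i
    show gS' (phiL (X i)) = iota' (mkI' (X i))
    have hX : phiL (X i) = ![zL, dL, vL, vinvL] i := by
      simp [phiL]
    rw [hX]
    fin_cases i
    · show gS' zL = iota' (mkI' ZZ)
      rw [zL, gS_single']
      simp [uU_val', zQ']
    · show gS' dL = iota' (mkI' DD)
      rw [dL, map_sub, gS_single', gS_single']
      have hD : iota' (mkI' DD) * (uU' : SS')
          = ((wU'⁻¹ : SS'ˣ) : SS') - (wU' : SS') := by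
        rw [uU_val', wU_inv_val', wU_val', ← map_mul, hDZ', map_sub]
      have huu : (uU' : SS') * ((uU'⁻¹ : SS'ˣ) : SS') = 1 := uU'.mul_inv
      have h1 : ((uU' ^ (-1 : ℤ) * wU' ^ (-1 : ℤ) : SS'ˣ) : SS')
          = ((uU'⁻¹ : SS'ˣ) : SS') * ((wU'⁻¹ : SS'ˣ) : SS') := by
        simp
      have h2 : ((uU' ^ (-1 : ℤ) * wU' ^ (1 : ℤ) : SS'ˣ) : SS')
          = ((uU'⁻¹ : SS'ˣ) : SS') * (wU' : SS') := by
        simp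
      rw [h1, h2]
      calc ((uU'⁻¹ : SS'ˣ) : SS') * ((wU'⁻¹ : SS'ˣ) : SS')
            - ((uU'⁻¹ : SS'ˣ) : SS') * (wU' : SS')
          = ((uU'⁻¹ : SS'ˣ) : SS') * (((wU'⁻¹ : SS'ˣ) : SS') - (wU' : SS')) := by
            ring
        _ = ((uU'⁻¹ : SS'ˣ) : SS') * (iota' (mkI' DD) * (uU' : SS')) := by rw [hD]
        _ = iota' (mkI' DD) * ((uU' : SS') * ((uU'⁻¹ : SS'ˣ) : SS')) := by ring
        _ = iota' (mkI' DD) := by rw [huu, mul_one]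
    · show gS' vL = iota' (mkI' VV)
      rw [vL, gS_single']
      simp [wU_val']
    · show gS' vinvL = iota' (mkI' WW)
      rw [vinvL, gS_single']
      have h3 : ((uU' ^ (0 : ℤ) * wU' ^ (-1 : ℤ) : SS'ˣ) : SS')
          = ((wU'⁻¹ : SS'ˣ) : SS') := by simp
      rw [h3, wU_inv_val']

end KerPhiLAux

/-- The kernel of `φ` is exactly the ideal generated by `V·W − 1` and
`D·Z − (W − V)`; in particular `Λ = ℤ[Z, D, V, W]/(V·W − 1, D·Z − (W − V))` embeds as a
subring of `ℤ[z^{±1}, v^{±1}]`. -/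
theorem ker_phiL_eq_span :
    RingHom.ker phiL = Ideal.span {VV * WW - 1, DD * ZZ - (WW - VV)} ∧
    ∃ ι : (MvPolynomial (Fin 4) ℤ ⧸ Ideal.span {VV * WW - 1, DD * ZZ - (WW - VV)})
        →+* LaurentZV, Function.Injective ι := by
  have hker : RingHom.ker phiL = Ideal.span {VV * WW - 1, DD * ZZ - (WW - VV)} := by
    apply le_antisymm
    · intro p hp
      rw [RingHom.mem_ker] at hp
      have h0 : iota' (mkI' p) = 0 := by
        have hcf := RingHom.congr_fun gS_comp' p
        simp only [RingHom.comp_apply] at hcf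
        rw [← hcf, hp, map_zero]
      obtain ⟨m, hm⟩ :=
        (IsLocalization.map_eq_zero_iff (Submonoid.powers zQ') SS' (mkI' p)).1 h0
      obtain ⟨n, hn⟩ := m.2
      apply Z_pow_mul_mem' (n := n)
      have hq : mkI' (ZZ ^ n * p) = 0 := by
        rw [map_mul, map_pow, show mkI' ZZ = zQ' from rfl,
          show zQ' ^ n = (m : QQ') from hn]
        exact hm
      exact Ideal.Quotient.eq_zero_iff_mem.1 hq
    · rw [Ideal.span_le]
      rintro x (rfl | rfl)
      · show phiL (VV * WW - 1) = 0
        simp [phiL, VV, WW, vL, vinvL, AddMonoidAlgebra.single_mul_single,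
          AddMonoidAlgebra.one_def]
        rw [← AddMonoidAlgebra.one_def, eval₂_one, AddMonoidAlgebra.one_def]
        exact sub_self _
      · show phiL (DD * ZZ - (WW - VV)) = 0
        simp only [phiL, DD, ZZ, WW, VV, map_sub, map_mul, eval₂Hom_X',
          Matrix.cons_val_zero, Matrix.cons_val_one, Matrix.head_cons,
          Matrix.cons_val_two, Matrix.tail_cons, Matrix.cons_val_three]
        rw [dL, zL, vinvL, vL, sub_mul, AddMonoidAlgebra.single_mul_single,
          AddMonoidAlgebra.single_mul_single]
        norm_num
  refine ⟨hker, ?_⟩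
  rw [← hker]
  exact ⟨RingHom.kerLift phiL, RingHom.kerLift_injective phiL⟩
end

section
/- Let S be a commutative ring, let π : S → ℤ[X] be a ring homomorphism, let k and n be natural numbers with n ≥ 1, and let M be a k × k matrix with entries in S such that π(M i i) = X^n for every diagonal entry, and for every off-diagonal entry (i ≠ j) either π(M i j) = 0 or π(M i j) = X^r for some natural number r < n. Then det M ≠ 0 in S. -/
open Polynomial

/-- Let `S` be a commutative ring and `π : S → ℤ[X]` a ring
homomorphism.  If `M` is a `k × k` matrix over `S` with `π (M i i) = X^n` (`n ≥ 1`) on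
the diagonal and, off the diagonal, each `π (M i j)` equal to `0` or to `X^r` with
`r < n`, then `det M ≠ 0` in `S`. -/
theorem det_ne_zero_of_ringHom_diag_pow
    (S : Type*) [CommRing S] (π : S →+* ℤ[X])
    (k n : ℕ) (hn : 1 ≤ n)
    (M : Matrix (Fin k) (Fin k) S)
    (hdiag : ∀ i, π (M i i) = X ^ n)
    (hoff : ∀ i j, i ≠ j → π (M i j) = 0 ∨ ∃ r : ℕ, r < n ∧ π (M i j) = X ^ r) :
    M.det ≠ 0 := by
  intro h
  have ht1 : (1 : ℝ) ≤ (k : ℝ) + 1 := by have := Nat.cast_nonneg (α := ℝ) k; linarith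
  have ht0 : (0 : ℝ) ≤ (k : ℝ) + 1 := by positivity
  set φ : ℤ[X] →+* ℝ := eval₂RingHom (Int.castRingHom ℝ) ((k : ℝ) + 1) with hφ
  have hφX : ∀ m : ℕ, φ (X ^ m) = ((k : ℝ) + 1) ^ m := by
    intro m; simp [hφ]
  have hdet : ((φ.comp π).mapMatrix M).det = 0 := by
    rw [← RingHom.map_det, RingHom.comp_apply, h, map_zero, map_zero]
  refine absurd hdet (det_ne_zero_of_sum_row_lt_diag ?_)
  intro i
  have hentry : ∀ j, (φ.comp π).mapMatrix M i j = φ (π (M i j)) := by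
    intro j; rfl
  have hbound : ∀ j ∈ Finset.univ.erase i,
      ‖(φ.comp π).mapMatrix M i j‖ ≤ ((k : ℝ) + 1) ^ (n - 1) := by
    intro j hj
    have hji : j ≠ i := Finset.ne_of_mem_erase hj
    rw [hentry]
    rcases hoff i j (Ne.symm hji) with h' | ⟨r, hr, h'⟩
    · rw [h', map_zero, norm_zero]; positivity
    · rw [h', hφX, Real.norm_eq_abs, abs_of_nonneg (by positivity)]
      exact pow_le_pow_right₀ ht1 (by omega)
  calc ∑ j ∈ Finset.univ.erase i, ‖(φ.comp π).mapMatrix M i j‖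
      ≤ ∑ _j ∈ Finset.univ.erase i, ((k : ℝ) + 1) ^ (n - 1) :=
        Finset.sum_le_sum hbound
    _ = ((Finset.univ.erase i).card : ℝ) * ((k : ℝ) + 1) ^ (n - 1) := by
        rw [Finset.sum_const, nsmul_eq_mul]
    _ ≤ (k : ℝ) * ((k : ℝ) + 1) ^ (n - 1) := by
        apply mul_le_mul_of_nonneg_right _ (by positivity)
        rw [Finset.card_erase_of_mem (Finset.mem_univ i)]
        simp only [Finset.card_univ, Fintype.card_fin]
        exact_mod_cast Nat.cast_le.mpr (Nat.sub_le k 1)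
    _ < ((k : ℝ) + 1) * ((k : ℝ) + 1) ^ (n - 1) := by
        apply mul_lt_mul_of_pos_right (by linarith) (by positivity)
    _ = ((k : ℝ) + 1) ^ n := by
        rw [← pow_succ']; congr 1; omega
    _ = ‖(φ.comp π).mapMatrix M i i‖ := by
        rw [hentry, hdiag i, hφX, Real.norm_eq_abs, abs_of_nonneg (by positivity)]
end

section
/- Let R be an integral domain, let M be an R-module, let k and n be natural numbers with n ≥ 1, let v : Fin k → M be a family of elements of M, let φ : Fin k → (M →ₗ[R] R) be a family of R-linear functionals, and let π : R → ℤ[X] be a ring homomorphism. Suppose that π(φ i (v i)) = X^n for every i, and that for all i ≠ j either π(φ j (v i)) = 0 or π(φ j (v i)) = X^r for some natural number r < n. Then the family v is linearly independent over R. -/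
open Polynomial

/-- Let `R` be an integral domain, `M` an `R`-module, `v : Fin k → M`
a family of elements, `φ : Fin k → (M →ₗ[R] R)` a family of linear functionals, and
`π : R → ℤ[X]` a ring homomorphism.  If `π (φ i (v i)) = X^n` (`n ≥ 1`) for every `i`,
and for `i ≠ j` each `π (φ j (v i))` is `0` or `X^r` with `r < n`, then the family `v`
is linearly independent over `R`. -/
theorem linearIndependent_of_ringHom_pairing_diag_pow
    (R : Type*) [CommRing R] [IsDomain R]
    (M : Type*) [AddCommGroup M] [Module R M]
    (k n : ℕ) (hn : 1 ≤ n)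
    (v : Fin k → M) (φ : Fin k → (M →ₗ[R] R))
    (π : R →+* ℤ[X])
    (hdiag : ∀ i, π (φ i (v i)) = X ^ n)
    (hoff : ∀ i j, i ≠ j → π (φ j (v i)) = 0 ∨ ∃ r : ℕ, r < n ∧ π (φ j (v i)) = X ^ r) :
    LinearIndependent R v := by
  rw [Fintype.linearIndependent_iff]
  intro c hc
  set A : Matrix (Fin k) (Fin k) R := Matrix.of fun j i => φ j (v i) with hA
  set B : Matrix (Fin k) (Fin k) ℤ[X] := π.mapMatrix A with hB
  have hBent : ∀ j i, B j i = π (φ j (v i)) := fun j i => rfl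
  -- the key determinant computation
  have key : B.det.coeff (n * k) = 1 := by
    rw [Matrix.det_apply, Polynomial.finset_sum_coeff,
      Finset.sum_eq_single (1 : Equiv.Perm (Fin k))]
    · have : ∀ i : Fin k, B ((1 : Equiv.Perm (Fin k)) i) i = X ^ n := by
        intro i; simpa [hBent] using hdiag i
      simp only [this, Finset.prod_const, Finset.card_univ, Fintype.card_fin, ← pow_mul]
      simp
    · intro σ _ hσ
      obtain ⟨i0, hi0⟩ : ∃ i, σ i ≠ i := by
        by_contra h
        push_neg at h
        exact hσ (Equiv.ext h)
      have hb : ∀ i : Fin k, (B (σ i) i).natDegree ≤ n := by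
        intro i
        by_cases h : σ i = i
        · rw [hBent, h, hdiag i, natDegree_X_pow]
        · rcases hoff i (σ i) (fun he => h he.symm) with h0 | ⟨r, hr, hX⟩
          · rw [hBent, h0]; simp [Nat.zero_le]
          · rw [hBent, hX, natDegree_X_pow]; omega
      have hb0 : (B (σ i0) i0).natDegree < n := by
        rcases hoff i0 (σ i0) (fun he => hi0 he.symm) with h0 | ⟨r, hr, hX⟩
        · rw [hBent, h0, natDegree_zero]; omega
        · rw [hBent, hX, natDegree_X_pow]; exact hr
      have hdeg : (∏ i, B (σ i) i).natDegree < n * k := by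
        calc (∏ i, B (σ i) i).natDegree ≤ ∑ i, (B (σ i) i).natDegree :=
              Polynomial.natDegree_prod_le _ _
          _ < ∑ _i : Fin k, n :=
              Finset.sum_lt_sum (fun i _ => hb i) ⟨i0, Finset.mem_univ _, hb0⟩
          _ = n * k := by simp [Finset.sum_const, mul_comm]
      rw [Polynomial.coeff_smul, Polynomial.coeff_eq_zero_of_natDegree_lt hdeg, smul_zero]
    · intro h; exact absurd (Finset.mem_univ _) h
  have hdetB : B.det ≠ 0 := by
    intro h
    rw [h] at key
    simp at key
  have hdet : A.det ≠ 0 := by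
    intro h
    apply hdetB
    rw [hB, ← RingHom.map_det, h, map_zero]
  have hAc : A.mulVec c = 0 := by
    funext j
    have h1 := congrArg (φ j) hc
    simp only [map_sum, map_smul, map_zero] at h1
    simpa [Matrix.mulVec, dotProduct, hA, smul_eq_mul, mul_comm] using h1
  have h2 : A.det • c = 0 := by
    have h3 := congrArg A.adjugate.mulVec hAc
    rwa [Matrix.mulVec_mulVec, Matrix.adjugate_mul, Matrix.smul_mulVec,
      Matrix.one_mulVec, Matrix.mulVec_zero] at h3
  intro i
  have h4 := congrFun h2 i
  simp only [Pi.smul_apply, smul_eq_mul, Pi.zero_apply, mul_eq_zero] at h4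
  exact h4.resolve_left hdet
end
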